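/- arXiv:1606.01043 — 3 statements merged into one kernel-verified Lean document; each statement's English description precedes it below -/
import Mathlib

section
/- Let G be a graph on n vertices with independence number α ≥ 1. Then for all λ > 0, the independence polynomial satisfies P_G(λ) ≤ (1 + λn/α)^α. -/
open Finset MeasureTheory Real
open scoped Classical

noncomputable def indSets {V : Type*} [Fintype V] (G : SimpleGraph V) : Finset (Finset V) :=
  Finset.univ.filter (fun s => ∀ u ∈ s, ∀ v ∈ s, ¬ G.Adj u v)

/-- The independence polynomial (hard-core partition function). -/
noncomputable def indPoly {V : Type*} [Fintype V] (G : SimpleGraph V) (x : ℝ) : ℝ :=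
  ∑ s ∈ indSets G, x ^ s.card

/-- Expected size of an independent set from the hard-core model at fugacity x. -/
noncomputable def avgSize {V : Type*} [Fintype V] (G : SimpleGraph V) (x : ℝ) : ℝ :=
  x * deriv (indPoly G) x / indPoly G x

-- plain AM-GM, product form
lemma amgm_prod {V : Type*} (s : Finset V) (f : V → ℝ) (hf : ∀ i ∈ s, 0 ≤ f i)
    (hs : s.card ≠ 0) :
    ∏ i ∈ s, f i ≤ ((∑ i ∈ s, f i) / s.card) ^ s.card := by
  have h := Real.geom_mean_le_arith_mean_weighted s (fun _ => (s.card : ℝ)⁻¹) f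
    (fun i _ => by positivity) (by simp [Finset.sum_const]; field_simp) hf
  have hL : (∏ i ∈ s, f i ^ ((s.card : ℝ)⁻¹ : ℝ)) ^ (s.card : ℕ) = ∏ i ∈ s, f i := by
    rw [← Finset.prod_pow]
    refine Finset.prod_congr rfl fun i hi => ?_
    rw [← Real.rpow_natCast (f i ^ ((s.card : ℝ)⁻¹ : ℝ)) s.card, ← Real.rpow_mul (hf i hi)]
    rw [inv_mul_cancel₀ (by exact_mod_cast hs), Real.rpow_one]
  calc ∏ i ∈ s, f i = (∏ i ∈ s, f i ^ ((s.card : ℝ)⁻¹ : ℝ)) ^ (s.card : ℕ) := hL.symm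
    _ ≤ (∑ i ∈ s, (s.card : ℝ)⁻¹ * f i) ^ (s.card : ℕ) := by
        apply pow_le_pow_left₀ (Finset.prod_nonneg fun i hi => Real.rpow_nonneg (hf i hi) _) h
    _ = ((∑ i ∈ s, f i) / s.card) ^ s.card := by
        rw [← Finset.mul_sum]; ring_nf

lemma pad_amgm {V : Type*} [Fintype V] (α : ℕ) (hα1 : 1 ≤ α) (hαV : α ≤ Fintype.card V) :
    ∀ d (s : Finset V) (f : V → ℝ), (∀ i ∈ s, 1 ≤ f i) → s.card + d = α →
    ∏ i ∈ s, f i ≤ ((∑ i ∈ s, f i + d) / α) ^ α := by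
  intro d
  induction d with
  | zero =>
    intro s f hf hcard
    simp only [Nat.add_zero] at hcard
    have := amgm_prod s f (fun i hi => le_trans zero_le_one (hf i hi)) (by omega)
    rw [hcard] at this
    simpa using this
  | succ d ih =>
    intro s f hf hcard
    have hlt : s.card < Fintype.card V := by omega
    have hne : s ≠ Finset.univ := by
      intro h; rw [h, Finset.card_univ] at hlt; omega
    obtain ⟨x, hx⟩ : ∃ x, x ∉ s := by
      by_contra h; push_neg at h
      exact hne (Finset.eq_univ_iff_forall.2 h)
    set g : V → ℝ := fun i => if i = x then 1 else f i with hg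
    have h1 : ∏ i ∈ insert x s, g i = ∏ i ∈ s, f i := by
      rw [Finset.prod_insert hx]
      have : ∏ i ∈ s, g i = ∏ i ∈ s, f i :=
        Finset.prod_congr rfl fun i hi => by
          have : i ≠ x := fun h => hx (h ▸ hi)
          simp [hg, this]
      rw [this]; simp [hg]
    have h2 : ∑ i ∈ insert x s, g i = 1 + ∑ i ∈ s, f i := by
      rw [Finset.sum_insert hx]
      have : ∑ i ∈ s, g i = ∑ i ∈ s, f i :=
        Finset.sum_congr rfl fun i hi => by
          have : i ≠ x := fun h => hx (h ▸ hi)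
          simp [hg, this]
      rw [this]; simp [hg]
    have := ih (insert x s) g
      (fun i hi => by
        rcases Finset.mem_insert.1 hi with h | h
        · simp [hg, h]
        · simp only [hg]
          split <;> [exact le_refl 1; exact hf i h])
      (by rw [Finset.card_insert_of_notMem hx]; omega)
    rw [h1, h2] at this
    convert this using 3
    push_cast; ring

lemma key_lemma {V : Type*} [Fintype V] (G : SimpleGraph V) (α : ℕ)
    (hα : α = (indSets G).sup Finset.card) (hα1 : 1 ≤ α) :
    ∀ N (y : V → ℝ), (∀ i, 0 ≤ y i) → (Finset.univ.filter fun i => y i ≠ 0).card ≤ N →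
    ∑ I ∈ indSets G, ∏ i ∈ I, y i ≤ (((α : ℝ) + ∑ i, y i) / α) ^ α := by
  have hαV : α ≤ Fintype.card V := by
    rw [hα, ← Finset.card_univ]
    exact Finset.sup_le fun s _ => Finset.card_le_univ s
  have hαpos : (0 : ℝ) < α := by exact_mod_cast hα1
  intro N
  induction N using Nat.strong_induction_on with
  | _ N ih =>
    intro y hy hcard
    set s : Finset V := Finset.univ.filter fun i => y i ≠ 0 with hs
    by_cases hind : ∀ u ∈ s, ∀ v ∈ s, ¬ G.Adj u v
    · -- support is independent
      have hsI : s ∈ indSets G := Finset.mem_filter.2 ⟨Finset.mem_univ _, hind⟩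
      have hcs : s.card ≤ α := hα ▸ Finset.le_sup hsI
      have step1 : ∑ I ∈ indSets G, ∏ i ∈ I, y i
          = ∑ I ∈ (indSets G).filter (· ⊆ s), ∏ i ∈ I, y i := by
        refine (Finset.sum_filter_of_ne ?_).symm
        intro I _ hne i hiI
        refine Finset.mem_filter.2 ⟨Finset.mem_univ _, fun h0 => hne ?_⟩
        exact Finset.prod_eq_zero hiI h0
      have step2 : (indSets G).filter (· ⊆ s) = s.powerset := by
        ext I
        simp only [indSets, Finset.mem_filter, Finset.mem_powerset, Finset.mem_univ, true_and]
        constructor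
        · rintro ⟨_, h⟩; exact h
        · intro h; exact ⟨fun a ha b hb => hind a (h ha) b (h hb), h⟩
      have step3 : ∑ I ∈ s.powerset, ∏ i ∈ I, y i = ∏ i ∈ s, (y i + 1) := by
        rw [Finset.prod_add]
        exact Finset.sum_congr rfl fun t _ => by simp
      rw [step1, step2, step3]
      have hpad := pad_amgm α hα1 hαV (α - s.card) s (fun i => y i + 1)
        (fun i _ => by show 1 ≤ y i + 1; linarith [hy i]) (by omega)
      have hsum : ∑ i ∈ s, (y i + 1) = (∑ i ∈ s, y i) + s.card := by
        rw [Finset.sum_add_distrib]; simp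
      have hnum : (∑ i ∈ s, (y i + 1)) + ((α - s.card : ℕ) : ℝ)
          = (α : ℝ) + ∑ i ∈ s, y i := by
        rw [hsum, Nat.cast_sub hcs]; ring
      rw [hnum] at hpad
      refine hpad.trans ?_
      have hss : ∑ i ∈ s, y i ≤ ∑ i, y i :=
        Finset.sum_le_sum_of_subset_of_nonneg (Finset.subset_univ s) fun i _ _ => hy i
      have h0 : (0:ℝ) ≤ ∑ i ∈ s, y i := Finset.sum_nonneg fun i _ => hy i
      gcongr
    · push_neg at hind
      obtain ⟨u, hu, v, hv, huv⟩ := hind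
      have hne : u ≠ v := G.ne_of_adj huv
      have hyu : 0 < y u := lt_of_le_of_ne (hy u) (Ne.symm (Finset.mem_filter.1 hu).2)
      have hyv : 0 < y v := lt_of_le_of_ne (hy v) (Ne.symm (Finset.mem_filter.1 hv).2)
      set y1 : V → ℝ := Function.update (Function.update y u (y u + y v)) v 0 with hy1
      set y2 : V → ℝ := Function.update (Function.update y v (y u + y v)) u 0 with hy2
      have hy1v : y1 v = 0 := Function.update_self _ _ _
      have hy2u : y2 u = 0 := Function.update_self _ _ _
      have hy1u : y1 u = y u + y v := by
        rw [hy1, Function.update_of_ne hne, Function.update_self]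
      have hy2v : y2 v = y u + y v := by
        rw [hy2, Function.update_of_ne hne.symm, Function.update_self]
      have hy1o : ∀ i, i ≠ u → i ≠ v → y1 i = y i := fun i hiu hiv => by
        rw [hy1, Function.update_of_ne hiv, Function.update_of_ne hiu]
      have hy2o : ∀ i, i ≠ u → i ≠ v → y2 i = y i := fun i hiu hiv => by
        rw [hy2, Function.update_of_ne hiu, Function.update_of_ne hiv]
      have hy1n : ∀ i, 0 ≤ y1 i := by
        intro i
        rcases eq_or_ne i u with rfl | hiu
        · rw [hy1u]; linarith
        rcases eq_or_ne i v with rfl | hiv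
        · rw [hy1v]
        · rw [hy1o i hiu hiv]; exact hy i
      have hy2n : ∀ i, 0 ≤ y2 i := by
        intro i
        rcases eq_or_ne i u with rfl | hiu
        · rw [hy2u]
        rcases eq_or_ne i v with rfl | hiv
        · rw [hy2v]; linarith
        · rw [hy2o i hiu hiv]; exact hy i
      -- sums are preserved
      have sum3 : ∀ z : V → ℝ, ∑ i, z i = z u + z v + ∑ i ∈ (univ.erase u).erase v, z i := by
        intro z
        rw [← Finset.add_sum_erase _ z (Finset.mem_univ u),
          ← Finset.add_sum_erase _ z (Finset.mem_erase.2 ⟨hne.symm, Finset.mem_univ v⟩)]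
        ring
      have hsum1 : ∑ i, y1 i = ∑ i, y i := by
        rw [sum3 y1, sum3 y, hy1u, hy1v]
        have : ∑ i ∈ (univ.erase u).erase v, y1 i = ∑ i ∈ (univ.erase u).erase v, y i :=
          Finset.sum_congr rfl fun i hi => hy1o i (Finset.mem_erase.1 (Finset.mem_erase.1 hi).2).1
            (Finset.mem_erase.1 hi).1
        rw [this]; ring
      have hsum2 : ∑ i, y2 i = ∑ i, y i := by
        rw [sum3 y2, sum3 y, hy2u, hy2v]
        have : ∑ i ∈ (univ.erase u).erase v, y2 i = ∑ i ∈ (univ.erase u).erase v, y i :=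
          Finset.sum_congr rfl fun i hi => hy2o i (Finset.mem_erase.1 (Finset.mem_erase.1 hi).2).1
            (Finset.mem_erase.1 hi).1
        rw [this]; ring
      -- supports shrink
      have hsupp1 : (Finset.univ.filter fun i => y1 i ≠ 0) ⊆ s.erase v := by
        intro i hi
        have hiz : y1 i ≠ 0 := (Finset.mem_filter.1 hi).2
        have hiv : i ≠ v := fun h => hiz (h ▸ hy1v)
        refine Finset.mem_erase.2 ⟨hiv, ?_⟩
        rcases eq_or_ne i u with rfl | hiu
        · exact hu
        · rw [hs]
          refine Finset.mem_filter.2 ⟨Finset.mem_univ _, ?_⟩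
          rwa [← hy1o i hiu hiv]
      have hsupp2 : (Finset.univ.filter fun i => y2 i ≠ 0) ⊆ s.erase u := by
        intro i hi
        have hiz : y2 i ≠ 0 := (Finset.mem_filter.1 hi).2
        have hiu : i ≠ u := fun h => hiz (h ▸ hy2u)
        refine Finset.mem_erase.2 ⟨hiu, ?_⟩
        rcases eq_or_ne i v with rfl | hiv
        · exact hv
        · rw [hs]
          refine Finset.mem_filter.2 ⟨Finset.mem_univ _, ?_⟩
          rwa [← hy2o i hiu hiv]
      have hscard : 1 ≤ s.card := Finset.card_pos.2 ⟨u, hu⟩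
      have hlt1 : (Finset.univ.filter fun i => y1 i ≠ 0).card < N := by
        calc (Finset.univ.filter fun i => y1 i ≠ 0).card ≤ (s.erase v).card :=
              Finset.card_le_card hsupp1
          _ < s.card := Finset.card_erase_lt_of_mem hv
          _ ≤ N := hcard
      have hlt2 : (Finset.univ.filter fun i => y2 i ≠ 0).card < N := by
        calc (Finset.univ.filter fun i => y2 i ≠ 0).card ≤ (s.erase u).card :=
              Finset.card_le_card hsupp2
          _ < s.card := Finset.card_erase_lt_of_mem hu
          _ ≤ N := hcard
      have hb1 := ih _ hlt1 y1 hy1n le_rfl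
      have hb2 := ih _ hlt2 y2 hy2n le_rfl
      rw [hsum1] at hb1
      rw [hsum2] at hb2
      -- the convexity identity
      have hident : y u * (∑ I ∈ indSets G, ∏ i ∈ I, y1 i)
          + y v * (∑ I ∈ indSets G, ∏ i ∈ I, y2 i)
          = (y u + y v) * ∑ I ∈ indSets G, ∏ i ∈ I, y i := by
        rw [Finset.mul_sum, Finset.mul_sum, Finset.mul_sum, ← Finset.sum_add_distrib]
        refine Finset.sum_congr rfl fun I hI => ?_
        have hIind : ∀ a ∈ I, ∀ b ∈ I, ¬ G.Adj a b := (Finset.mem_filter.1 hI).2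
        by_cases hu' : u ∈ I
        · have hv' : v ∉ I := fun hv' => hIind u hu' v hv' huv
          have e1 : ∏ i ∈ I, y1 i = (y u + y v) * ∏ i ∈ I.erase u, y i := by
            rw [← Finset.mul_prod_erase I y1 hu', hy1u]
            congr 1
            refine Finset.prod_congr rfl fun i hi => ?_
            exact hy1o i (Finset.mem_erase.1 hi).1
              (fun h => hv' (h ▸ (Finset.mem_erase.1 hi).2))
          have e2 : ∏ i ∈ I, y2 i = 0 := Finset.prod_eq_zero hu' hy2u
          have e3 : ∏ i ∈ I, y i = y u * ∏ i ∈ I.erase u, y i :=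
            (Finset.mul_prod_erase I y hu').symm
          rw [e1, e2, e3]; ring
        · by_cases hv' : v ∈ I
          · have e1 : ∏ i ∈ I, y1 i = 0 := Finset.prod_eq_zero hv' hy1v
            have e2 : ∏ i ∈ I, y2 i = (y u + y v) * ∏ i ∈ I.erase v, y i := by
              rw [← Finset.mul_prod_erase I y2 hv', hy2v]
              congr 1
              refine Finset.prod_congr rfl fun i hi => ?_
              exact hy2o i (fun h => hu' (h ▸ (Finset.mem_erase.1 hi).2))
                (Finset.mem_erase.1 hi).1
            have e3 : ∏ i ∈ I, y i = y v * ∏ i ∈ I.erase v, y i :=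
              (Finset.mul_prod_erase I y hv').symm
            rw [e1, e2, e3]; ring
          · have e1 : ∏ i ∈ I, y1 i = ∏ i ∈ I, y i :=
              Finset.prod_congr rfl fun i hi => hy1o i (fun h => hu' (h ▸ hi))
                (fun h => hv' (h ▸ hi))
            have e2 : ∏ i ∈ I, y2 i = ∏ i ∈ I, y i :=
              Finset.prod_congr rfl fun i hi => hy2o i (fun h => hu' (h ▸ hi))
                (fun h => hv' (h ▸ hi))
            rw [e1, e2]; ring
      have hfin : (y u + y v) * ∑ I ∈ indSets G, ∏ i ∈ I, y i
          ≤ (y u + y v) * (((α : ℝ) + ∑ i, y i) / α) ^ α := by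
        rw [← hident]
        have b1 := mul_le_mul_of_nonneg_left hb1 hyu.le
        have b2 := mul_le_mul_of_nonneg_left hb2 hyv.le
        calc y u * (∑ I ∈ indSets G, ∏ i ∈ I, y1 i)
            + y v * (∑ I ∈ indSets G, ∏ i ∈ I, y2 i)
            ≤ y u * (((α : ℝ) + ∑ i, y i) / α) ^ α
              + y v * (((α : ℝ) + ∑ i, y i) / α) ^ α := add_le_add b1 b2
          _ = (y u + y v) * (((α : ℝ) + ∑ i, y i) / α) ^ α := by ring
      exact le_of_mul_le_mul_left hfin (by linarith)


theorem stmt17 {V : Type*} [Fintype V] [Nonempty V] (G : SimpleGraph V) (α : ℕ)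
    (hα : α = (indSets G).sup Finset.card) (hα1 : 1 ≤ α) (l : ℝ) (hl : 0 < l) :
    indPoly G l ≤ (1 + l * (Fintype.card V : ℝ) / (α : ℝ)) ^ α := by
  have hαpos : (0 : ℝ) < α := by exact_mod_cast hα1
  have hbound : (Finset.univ.filter fun i => (fun _ : V => l) i ≠ 0).card ≤ Fintype.card V :=
    le_trans (Finset.card_filter_le _ _) (le_of_eq Finset.card_univ)
  have h := key_lemma G α hα hα1 (Fintype.card V) (fun _ => l) (fun _ => hl.le) hbound
  have h1 : ∑ I ∈ indSets G, ∏ _i ∈ I, l = indPoly G l := by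
    unfold indPoly
    exact Finset.sum_congr rfl fun I _ => by rw [Finset.prod_const]
  have h2 : ∑ _i : V, l = (Fintype.card V : ℝ) * l := by
    rw [Finset.sum_const, Finset.card_univ, nsmul_eq_mul]
  rw [h1, h2] at h
  refine h.trans_eq ?_
  congr 1
  field_simp
end

section
/- For any finite graph G, α(G) = ᾱ_G(1) + ∫₁^∞ Var_λ(|I|)/λ dλ, where α(G) is the independence number, ᾱ_G(λ) = λP_G'(λ)/P_G(λ), and Var_λ(|I|) is the variance of the size of an independent set under the hard-core model at fugacity λ; in particular ᾱ_G(λ) → α(G) as λ → ∞. -/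
open Finset MeasureTheory Real
open scoped Classical

section Aux

variable {V : Type*} [Fintype V] (G : SimpleGraph V)

lemma empty_mem_indSets : (∅ : Finset V) ∈ indSets G := by
  simp [indSets]

/-- numerator `∑ |s| x^|s|` -/
noncomputable def nFun (x : ℝ) : ℝ := ∑ s ∈ indSets G, (s.card : ℝ) * x ^ s.card

/-- derivative of `indPoly` -/
noncomputable def dFun (x : ℝ) : ℝ := ∑ s ∈ indSets G, (s.card : ℝ) * x ^ (s.card - 1)

/-- derivative of `nFun` -/
noncomputable def qFun (x : ℝ) : ℝ :=
  ∑ s ∈ indSets G, (s.card : ℝ) * ((s.card : ℝ) * x ^ (s.card - 1))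

/-- second moment numerator `∑ |s|^2 x^|s|` -/
noncomputable def mFun (x : ℝ) : ℝ := ∑ s ∈ indSets G, (s.card : ℝ) ^ 2 * x ^ s.card

lemma indPoly_pos {x : ℝ} (hx : 0 < x) : 0 < indPoly G x :=
  Finset.sum_pos (fun s _ => pow_pos hx _) ⟨∅, empty_mem_indSets G⟩

lemma hasDerivAt_indPoly (x : ℝ) : HasDerivAt (indPoly G) (dFun G x) x := by
  have : HasDerivAt (fun y : ℝ => ∑ s ∈ indSets G, y ^ s.card)
      (∑ s ∈ indSets G, (s.card : ℝ) * x ^ (s.card - 1)) x :=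
    HasDerivAt.fun_sum (fun (s : Finset V) _ => hasDerivAt_pow s.card x)
  exact this

lemma hasDerivAt_nFun (x : ℝ) : HasDerivAt (nFun G) (qFun G x) x := by
  have : HasDerivAt (fun y : ℝ => ∑ s ∈ indSets G, (s.card : ℝ) * y ^ s.card)
      (∑ s ∈ indSets G, (s.card : ℝ) * ((s.card : ℝ) * x ^ (s.card - 1))) x :=
    HasDerivAt.fun_sum (fun (s : Finset V) _ => (hasDerivAt_pow s.card x).const_mul _)
  exact this

lemma mul_dFun (x : ℝ) : x * dFun G x = nFun G x := by
  rw [dFun, nFun, Finset.mul_sum]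
  refine Finset.sum_congr rfl (fun s _ => ?_)
  rcases Nat.eq_zero_or_pos s.card with h | h
  · simp [h]
  · obtain ⟨k, hk⟩ := Nat.exists_eq_succ_of_ne_zero h.ne'
    rw [hk]
    simp [pow_succ]
    ring

lemma mul_qFun (x : ℝ) : x * qFun G x = mFun G x := by
  rw [qFun, mFun, Finset.mul_sum]
  refine Finset.sum_congr rfl (fun s _ => ?_)
  rcases Nat.eq_zero_or_pos s.card with h | h
  · simp [h]
  · obtain ⟨k, hk⟩ := Nat.exists_eq_succ_of_ne_zero h.ne'
    rw [hk]
    simp [pow_succ]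
    ring

lemma avgSize_eq (x : ℝ) : avgSize G x = nFun G x / indPoly G x := by
  rw [avgSize, (hasDerivAt_indPoly G x).deriv, mul_dFun]

/-- Cauchy–Schwarz: `(nFun)^2 ≤ mFun * indPoly` for `0 ≤ x`. -/
lemma nFun_sq_le {x : ℝ} (hx : 0 ≤ x) : (nFun G x) ^ 2 ≤ mFun G x * indPoly G x := by
  have h := Finset.sum_mul_sq_le_sq_mul_sq (indSets G)
    (fun s => (s.card : ℝ) * Real.sqrt (x ^ s.card))
    (fun s => Real.sqrt (x ^ s.card))
  have e1 : ∀ s : Finset V, ((s.card : ℝ) * Real.sqrt (x ^ s.card)) * Real.sqrt (x ^ s.card)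
      = (s.card : ℝ) * x ^ s.card := by
    intro s
    rw [mul_assoc, Real.mul_self_sqrt (pow_nonneg hx _)]
  have e2 : ∀ s : Finset V, ((s.card : ℝ) * Real.sqrt (x ^ s.card)) ^ 2
      = (s.card : ℝ) ^ 2 * x ^ s.card := by
    intro s
    rw [mul_pow, Real.sq_sqrt (pow_nonneg hx _)]
  have e3 : ∀ s : Finset V, (Real.sqrt (x ^ s.card)) ^ 2 = x ^ s.card := by
    intro s
    exact Real.sq_sqrt (pow_nonneg hx _)
  simp only [e1, e2, e3] at h
  simpa [nFun, mFun, indPoly] using h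

lemma hasDerivAt_ratio {x : ℝ} (hx : 0 < x) :
    HasDerivAt (fun y => nFun G y / indPoly G y)
      ((qFun G x * indPoly G x - nFun G x * dFun G x) / (indPoly G x) ^ 2) x :=
  (hasDerivAt_nFun G x).div (hasDerivAt_indPoly G x) (indPoly_pos G hx).ne'

lemma ratio_deriv_nonneg {x : ℝ} (hx : 0 < x) :
    0 ≤ (qFun G x * indPoly G x - nFun G x * dFun G x) / (indPoly G x) ^ 2 := by
  apply div_nonneg _ (sq_nonneg _)
  have hcs : (nFun G x) ^ 2 ≤ mFun G x * indPoly G x := nFun_sq_le G hx.le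
  have h1 : x * (qFun G x * indPoly G x - nFun G x * dFun G x)
      = mFun G x * indPoly G x - (nFun G x) ^ 2 := by
    have hq := mul_qFun G x
    have hd := mul_dFun G x
    linear_combination indPoly G x * hq - nFun G x * hd
  nlinarith [h1, hcs, hx]

lemma integrand_eq {x : ℝ} (hx : 0 < x) :
    (mFun G x / indPoly G x - (nFun G x / indPoly G x) ^ 2) / x
      = (qFun G x * indPoly G x - nFun G x * dFun G x) / (indPoly G x) ^ 2 := by
  have hP : indPoly G x ≠ 0 := (indPoly_pos G hx).ne'
  have hq := mul_qFun G x
  have hd := mul_dFun G x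
  field_simp
  linear_combination (-(indPoly G x)) * hq + nFun G x * hd

lemma card_le_sup {s : Finset V} (hs : s ∈ indSets G) :
    (s.card : ℝ) ≤ ((indSets G).sup Finset.card : ℕ) := by
  exact_mod_cast Finset.le_sup (f := Finset.card) hs

lemma ratio_le {x : ℝ} (hx : 0 < x) :
    nFun G x / indPoly G x ≤ ((indSets G).sup Finset.card : ℕ) := by
  rw [div_le_iff₀ (indPoly_pos G hx)]
  rw [indPoly, Finset.mul_sum, nFun]
  refine Finset.sum_le_sum (fun s hs => ?_)
  exact mul_le_mul_of_nonneg_right (card_le_sup G hs) (pow_pos hx _).le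

lemma ratio_lb {x : ℝ} (hx : 1 ≤ x) :
    (((indSets G).sup Finset.card : ℕ) : ℝ)
      - ((indSets G).card : ℝ) * ((indSets G).sup Finset.card : ℕ) / x
      ≤ nFun G x / indPoly G x := by
  set α : ℕ := (indSets G).sup Finset.card with hα
  have hx0 : (0 : ℝ) < x := lt_of_lt_of_le one_pos hx
  have hP := indPoly_pos G hx0
  obtain ⟨s₀, hs₀, hs₀c⟩ := Finset.exists_mem_eq_sup (indSets G)
    ⟨∅, empty_mem_indSets G⟩ Finset.card
  have hPge : x ^ α ≤ indPoly G x := by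
    rw [indPoly]
    have h2 : x ^ s₀.card ≤ ∑ s ∈ indSets G, x ^ s.card :=
      Finset.single_le_sum (f := fun s : Finset V => x ^ s.card)
        (fun s _ => (pow_pos hx0 _).le) hs₀
    rw [hα, hs₀c]
    exact h2
  -- bound the gap
  have hterm : ∀ s ∈ indSets G,
      ((α : ℝ) - s.card) * x ^ s.card ≤ (α : ℝ) * x ^ α / x := by
    intro s hs
    have hsle : s.card ≤ α := Finset.le_sup (f := Finset.card) hs
    rcases eq_or_lt_of_le hsle with h | h
    · have : ((α : ℝ) - s.card) = 0 := by rw [← h]; ring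
      rw [this, zero_mul]
      positivity
    · rw [le_div_iff₀ hx0]
      have h1 : ((α : ℝ) - s.card) * x ^ s.card * x = ((α : ℝ) - s.card) * x ^ (s.card + 1) := by
        rw [pow_succ]; ring
      rw [h1]
      apply mul_le_mul
      · have := card_le_sup G hs; linarith
      · exact pow_le_pow_right₀ hx h
      · positivity
      · positivity
  have hgap : (α : ℝ) * indPoly G x - nFun G x
      ≤ ((indSets G).card : ℝ) * ((α : ℝ) * x ^ α / x) := by
    have : (α : ℝ) * indPoly G x - nFun G x
        = ∑ s ∈ indSets G, ((α : ℝ) - s.card) * x ^ s.card := by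
      rw [indPoly, nFun, Finset.mul_sum, ← Finset.sum_sub_distrib]
      refine Finset.sum_congr rfl (fun s _ => ?_); ring
    rw [this]
    calc ∑ s ∈ indSets G, ((α : ℝ) - s.card) * x ^ s.card
        ≤ ∑ _s ∈ indSets G, (α : ℝ) * x ^ α / x := Finset.sum_le_sum hterm
      _ = ((indSets G).card : ℝ) * ((α : ℝ) * x ^ α / x) := by
          rw [Finset.sum_const, nsmul_eq_mul]
  have hgap0 : 0 ≤ ((indSets G).card : ℝ) * ((α : ℝ) * x ^ α / x) := by positivity
  have hdiv : ((α : ℝ) * indPoly G x - nFun G x) / indPoly G x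
      ≤ (((indSets G).card : ℝ) * ((α : ℝ) * x ^ α / x)) / x ^ α :=
    div_le_div₀ hgap0 hgap (pow_pos hx0 _) hPge
  have heq : (((indSets G).card : ℝ) * ((α : ℝ) * x ^ α / x)) / x ^ α
      = ((indSets G).card : ℝ) * (α : ℝ) / x := by
    field_simp
  rw [heq] at hdiv
  have h2 : ((α : ℝ) * indPoly G x - nFun G x) / indPoly G x
      = (α : ℝ) - nFun G x / indPoly G x := by
    field_simp
  rw [h2] at hdiv
  linarith

lemma tendsto_ratio :
    Filter.Tendsto (fun x => nFun G x / indPoly G x) Filter.atTop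
      (nhds (((indSets G).sup Finset.card : ℕ) : ℝ)) := by
  set α : ℕ := (indSets G).sup Finset.card
  set C : ℝ := ((indSets G).card : ℝ) * (α : ℕ)
  have hlow : Filter.Tendsto (fun x : ℝ => (α : ℝ) - C / x) Filter.atTop (nhds (α : ℝ)) := by
    have h0 : Filter.Tendsto (fun x : ℝ => C / x) Filter.atTop (nhds 0) :=
      Filter.Tendsto.div_atTop tendsto_const_nhds Filter.tendsto_id
    have := Filter.Tendsto.sub (tendsto_const_nhds (x := (α : ℝ))) h0
    simpa using this
  refine tendsto_of_tendsto_of_tendsto_of_le_of_le' hlow tendsto_const_nhds ?_ ?_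
  · filter_upwards [Filter.eventually_ge_atTop (1 : ℝ)] with x hx
    exact ratio_lb G hx
  · filter_upwards [Filter.eventually_ge_atTop (1 : ℝ)] with x hx
    exact ratio_le G (lt_of_lt_of_le one_pos hx)

end Aux

theorem stmt18 {V : Type*} [Fintype V] (G : SimpleGraph V) :
    ((((indSets G).sup Finset.card : ℕ) : ℝ)
        = avgSize G 1 + ∫ l in Set.Ioi (1 : ℝ),
            ((∑ s ∈ indSets G, (s.card : ℝ) ^ 2 * l ^ s.card) / indPoly G l
              - ((∑ s ∈ indSets G, (s.card : ℝ) * l ^ s.card) / indPoly G l) ^ 2) / l) ∧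
      Filter.Tendsto (avgSize G) Filter.atTop
        (nhds (((indSets G).sup Finset.card : ℕ) : ℝ)) := by
  have havg : avgSize G = fun x => nFun G x / indPoly G x := funext (avgSize_eq G)
  have htend : Filter.Tendsto (avgSize G) Filter.atTop
      (nhds (((indSets G).sup Finset.card : ℕ) : ℝ)) := by
    rw [havg]; exact tendsto_ratio G
  refine ⟨?_, htend⟩
  have hint : (∫ l in Set.Ioi (1 : ℝ),
      ((∑ s ∈ indSets G, (s.card : ℝ) ^ 2 * l ^ s.card) / indPoly G l
        - ((∑ s ∈ indSets G, (s.card : ℝ) * l ^ s.card) / indPoly G l) ^ 2) / l)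
      = (((indSets G).sup Finset.card : ℕ) : ℝ) - nFun G 1 / indPoly G 1 := by
    have hcongr : Set.EqOn
        (fun l : ℝ => ((∑ s ∈ indSets G, (s.card : ℝ) ^ 2 * l ^ s.card) / indPoly G l
          - ((∑ s ∈ indSets G, (s.card : ℝ) * l ^ s.card) / indPoly G l) ^ 2) / l)
        (fun l : ℝ => (qFun G l * indPoly G l - nFun G l * dFun G l) / (indPoly G l) ^ 2)
        (Set.Ioi 1) := by
      intro l hl
      have hl0 : (0 : ℝ) < l := lt_trans one_pos hl
      simpa [mFun, nFun] using integrand_eq G hl0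
    rw [setIntegral_congr_fun measurableSet_Ioi hcongr]
    exact integral_Ioi_of_hasDerivAt_of_nonneg'
      (fun x hx => hasDerivAt_ratio G (lt_of_lt_of_le one_pos hx))
      (fun x hx => ratio_deriv_nonneg G (lt_trans one_pos hx))
      (tendsto_ratio G)
  rw [hint, havg]
  ring
end

section
/- Let i_k(G) denote the number of independent sets of size k in a graph G on n vertices, with i_{k-1}(G) > 0 and k ≥ 2. Then (k²·i_k(G)/i_{k-1}(G) − n)/(k² − 1) ≤ i_{k+1}(G)/i_k(G), provided i_k(G) > 0 (Moon–Moser inequality for independent sets). -/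
open Finset MeasureTheory Real
open scoped Classical

/-- Number of independent sets of size k. -/
noncomputable def numIs {V : Type*} [Fintype V] (G : SimpleGraph V) (k : ℕ) : ℕ :=
  ((indSets G).filter (fun s => s.card = k)).card

namespace MoonMoserAux

variable {V : Type*} [Fintype V] (G : SimpleGraph V)

/-- Independent sets of size `k`. -/
noncomputable def level (k : ℕ) : Finset (Finset V) :=
  (indSets G).filter (fun s => s.card = k)

/-- Vertices extending an independent set `T` to a larger independent set. -/
noncomputable def ext (T : Finset V) : Finset V :=
  (Finset.univ \ T).filter (fun v => insert v T ∈ indSets G)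

lemma mem_indSets {s : Finset V} : s ∈ indSets G ↔ ∀ u ∈ s, ∀ v ∈ s, ¬ G.Adj u v := by
  simp [indSets]

lemma indSets_subset {s t : Finset V} (h : t ⊆ s) (hs : s ∈ indSets G) : t ∈ indSets G := by
  rw [mem_indSets] at *
  exact fun u hu v hv => hs u (h hu) v (h hv)

lemma mem_ext {T : Finset V} {v : V} : v ∈ ext G T ↔ v ∉ T ∧ insert v T ∈ indSets G := by
  simp [ext]

lemma mem_level {k : ℕ} {s : Finset V} :
    s ∈ level G k ↔ s ∈ indSets G ∧ s.card = k := by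
  simp [level]

lemma numIs_eq (k : ℕ) : numIs G k = (level G k).card := rfl

/-- The key bijection: pairs (T, v) with T an independent m-set and v extending it
correspond to pairs (S, u) with S an independent (m+1)-set and u ∈ S. -/
lemma bij (m : ℕ) (f : Finset V → V → ℕ) :
    ∑ T ∈ level G m, ∑ v ∈ ext G T, f T v
      = ∑ S ∈ level G (m + 1), ∑ u ∈ S, f (S.erase u) u := by
  rw [Finset.sum_sigma' (level G m) (fun T => ext G T) (fun T v => f T v),
      Finset.sum_sigma' (level G (m + 1)) (fun S => S) (fun S u => f (S.erase u) u)]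
  refine Finset.sum_nbij' (fun p => ⟨insert p.2 p.1, p.2⟩) (fun q => ⟨q.1.erase q.2, q.2⟩)
    ?_ ?_ ?_ ?_ ?_
  · rintro ⟨T, v⟩ hp
    simp only [Finset.mem_sigma] at hp ⊢
    obtain ⟨hT, hv⟩ := hp
    rw [mem_level] at hT
    rw [mem_ext] at hv
    refine ⟨?_, Finset.mem_insert_self _ _⟩
    rw [mem_level]
    exact ⟨hv.2, by rw [Finset.card_insert_of_notMem hv.1, hT.2]⟩
  · rintro ⟨S, u⟩ hq
    simp only [Finset.mem_sigma] at hq ⊢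
    obtain ⟨hS, hu⟩ := hq
    rw [mem_level] at hS
    constructor
    · rw [mem_level]
      refine ⟨indSets_subset G (Finset.erase_subset _ _) hS.1, ?_⟩
      rw [Finset.card_erase_of_mem hu, hS.2]
      omega
    · rw [mem_ext, Finset.insert_erase hu]
      exact ⟨Finset.notMem_erase _ _, hS.1⟩
  · rintro ⟨T, v⟩ hp
    simp only [Finset.mem_sigma] at hp
    obtain ⟨hT, hv⟩ := hp
    rw [mem_ext] at hv
    simp [Finset.erase_insert hv.1]
  · rintro ⟨S, u⟩ hq
    simp only [Finset.mem_sigma] at hq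
    simp [Finset.insert_erase hq.2]
  · rintro ⟨T, v⟩ hp
    simp only [Finset.mem_sigma] at hp
    obtain ⟨hT, hv⟩ := hp
    rw [mem_ext] at hv
    simp [Finset.erase_insert hv.1]

lemma sum_ext_card (m : ℕ) :
    ∑ T ∈ level G m, (ext G T).card = (m + 1) * numIs G (m + 1) := by
  have h := bij G m (fun _ _ => 1)
  simp only [Finset.sum_const, smul_eq_mul, mul_one] at h
  rw [h]
  have h2 : ∀ S ∈ level G (m + 1), S.card = m + 1 :=
    fun S hS => ((mem_level G).mp hS).2
  rw [Finset.sum_congr rfl h2, Finset.sum_const, smul_eq_mul, numIs_eq, mul_comm]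

lemma sum_ext_sq (m : ℕ) :
    ∑ T ∈ level G m, (ext G T).card ^ 2
      = ∑ S ∈ level G (m + 1), ∑ u ∈ S, (ext G (S.erase u)).card := by
  have h := bij G m (fun T _ => (ext G T).card)
  simp only [Finset.sum_const, smul_eq_mul, sq] at h ⊢
  rw [← h]

/-- The local Moon–Moser estimate for a single independent set `S`. -/
lemma local_bound {S : Finset V} {k : ℕ} (hk : 1 ≤ k) (hS : S ∈ level G k) :
    ∑ u ∈ S, (ext G (S.erase u)).card
      ≤ Fintype.card V + (k - 1) * (ext G S).card := by
  rw [mem_level] at hS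
  obtain ⟨hSind, hScard⟩ := hS
  have hstep : ∀ u ∈ S, (ext G (S.erase u)).card
      = ∑ v : V, if v ∈ ext G (S.erase u) then 1 else 0 := by
    intro u _
    simp [Finset.sum_ite_mem, Finset.univ_inter]
  rw [Finset.sum_congr rfl hstep, Finset.sum_comm]
  have hbound : ∀ v : V,
      (∑ u ∈ S, if v ∈ ext G (S.erase u) then 1 else 0)
        ≤ 1 + (k - 1) * (if v ∈ ext G S then 1 else 0) := by
    intro v
    rw [← Finset.card_filter]
    by_cases hv : v ∈ ext G S
    · simp only [hv, if_true, mul_one]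
      calc (S.filter (fun u => v ∈ ext G (S.erase u))).card
          ≤ S.card := Finset.card_filter_le _ _
        _ = k := hScard
        _ ≤ 1 + (k - 1) := by omega
    · simp only [hv, if_false, mul_zero, add_zero]
      apply Finset.card_le_one.mpr
      intro u1 hu1 u2 hu2
      rw [Finset.mem_filter] at hu1 hu2
      obtain ⟨hu1S, hv1⟩ := hu1
      obtain ⟨hu2S, hv2⟩ := hu2
      rw [mem_ext] at hv1 hv2
      by_cases hvS : v ∈ S
      · -- then v ∉ S.erase u forces u = v
        have e1 : u1 = v := by
          by_contra h
          exact hv1.1 (Finset.mem_erase.mpr ⟨fun hh => h hh.symm, hvS⟩)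
        have e2 : u2 = v := by
          by_contra h
          exact hv2.1 (Finset.mem_erase.mpr ⟨fun hh => h hh.symm, hvS⟩)
        rw [e1, e2]
      · -- v ∉ S; if u1 ≠ u2 then v extends S, contradiction
        by_contra hne
        apply hv
        rw [mem_ext]
        refine ⟨hvS, ?_⟩
        -- v is non-adjacent to every vertex of S
        have hnadj : ∀ b ∈ S, ¬ G.Adj v b ∧ ¬ G.Adj b v := by
          intro b hb
          have hcase : b ≠ u1 ∨ b ≠ u2 := by
            by_contra h
            push_neg at h
            exact hne (h.1 ▸ h.2 ▸ rfl)
          rcases hcase with h | h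
          · have hb' : b ∈ insert v (S.erase u1) :=
              Finset.mem_insert_of_mem (Finset.mem_erase.mpr ⟨h, hb⟩)
            have hv' : v ∈ insert v (S.erase u1) := Finset.mem_insert_self _ _
            rw [mem_indSets] at hv1
            exact ⟨hv1.2 v hv' b hb', hv1.2 b hb' v hv'⟩
          · have hb' : b ∈ insert v (S.erase u2) :=
              Finset.mem_insert_of_mem (Finset.mem_erase.mpr ⟨h, hb⟩)
            have hv' : v ∈ insert v (S.erase u2) := Finset.mem_insert_self _ _
            rw [mem_indSets] at hv2
            exact ⟨hv2.2 v hv' b hb', hv2.2 b hb' v hv'⟩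
        rw [mem_indSets]
        intro x hx y hy
        rcases Finset.mem_insert.mp hx with hxv | hxS
        · rcases Finset.mem_insert.mp hy with hyv | hyS
          · subst hxv; subst hyv; exact G.loopless.irrefl _
          · subst hxv; exact (hnadj y hyS).1
        · rcases Finset.mem_insert.mp hy with hyv | hyS
          · subst hyv; exact (hnadj x hxS).2
          · rw [mem_indSets] at hSind
            exact hSind x hxS y hyS
  calc ∑ v : V, ∑ u ∈ S, (if v ∈ ext G (S.erase u) then 1 else 0)
      ≤ ∑ v : V, (1 + (k - 1) * (if v ∈ ext G S then 1 else 0)) :=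
        Finset.sum_le_sum (fun v _ => hbound v)
    _ = Fintype.card V + (k - 1) * (ext G S).card := by
        rw [Finset.sum_add_distrib, Finset.sum_const, ← Finset.mul_sum]
        simp [Finset.sum_ite_mem, Finset.univ_inter]

/-- Main counting inequality, in ℕ. -/
lemma keyNat (k : ℕ) (hk : 1 ≤ k) :
    (k * numIs G k) ^ 2
      ≤ numIs G (k - 1) *
          (Fintype.card V * numIs G k + (k - 1) * ((k + 1) * numIs G (k + 1))) := by
  obtain ⟨m, rfl⟩ : ∃ m, k = m + 1 := ⟨k - 1, by omega⟩
  simp only [Nat.add_sub_cancel]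
  have h1 : ∑ T ∈ level G m, (ext G T).card = (m + 1) * numIs G (m + 1) :=
    sum_ext_card G m
  have h2 : ∑ S ∈ level G (m + 1), (ext G S).card = (m + 2) * numIs G (m + 2) :=
    sum_ext_card G (m + 1)
  have h3 : ∑ T ∈ level G m, (ext G T).card ^ 2
      ≤ Fintype.card V * numIs G (m + 1) + m * ((m + 2) * numIs G (m + 2)) := by
    rw [sum_ext_sq]
    calc ∑ S ∈ level G (m + 1), ∑ u ∈ S, (ext G (S.erase u)).card
        ≤ ∑ S ∈ level G (m + 1), (Fintype.card V + (m + 1 - 1) * (ext G S).card) :=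
          Finset.sum_le_sum (fun S hS => local_bound G (by omega) hS)
      _ = Fintype.card V * numIs G (m + 1) + m * ((m + 2) * numIs G (m + 2)) := by
          rw [Finset.sum_add_distrib, Finset.sum_const, ← Finset.mul_sum]
          simp only [Nat.add_sub_cancel, smul_eq_mul, mul_one]
          rw [h2, numIs_eq, numIs_eq, mul_comm (level G (m+1)).card]
  have hCS : (∑ T ∈ level G m, (ext G T).card) ^ 2
      ≤ (level G m).card * ∑ T ∈ level G m, (ext G T).card ^ 2 := by
    exact sq_sum_le_card_mul_sum_sq
  calc ((m + 1) * numIs G (m + 1)) ^ 2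
      = (∑ T ∈ level G m, (ext G T).card) ^ 2 := by rw [h1]
    _ ≤ (level G m).card * ∑ T ∈ level G m, (ext G T).card ^ 2 := hCS
    _ ≤ numIs G m *
          (Fintype.card V * numIs G (m + 1) + m * ((m + 2) * numIs G (m + 2))) := by
        rw [numIs_eq]
        exact Nat.mul_le_mul_left _ h3
    _ = numIs G (m + 1 - 1) *
          (Fintype.card V * numIs G (m + 1) + m * ((m + 2) * numIs G (m + 2))) := by
        simp

end MoonMoserAux

theorem stmt19 {V : Type*} [Fintype V] (G : SimpleGraph V) (k : ℕ) (hk : 2 ≤ k)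
    (h1 : 0 < numIs G (k - 1)) (h2 : 0 < numIs G k) :
    ((k : ℝ) ^ 2 * numIs G k / numIs G (k - 1) - (Fintype.card V : ℝ))
        / ((k : ℝ) ^ 2 - 1)
      ≤ (numIs G (k + 1) : ℝ) / numIs G k := by
  have key := MoonMoserAux.keyNat G k (by omega)
  set a := numIs G (k - 1) with ha'
  set b := numIs G k with hb'
  set c := numIs G (k + 1) with hc'
  set n := Fintype.card V with hn'
  -- cast to ℝ
  have keyR : ((k : ℝ) * b) ^ 2 ≤ (a : ℝ) * ((n : ℝ) * b + ((k : ℝ) - 1) * (((k : ℝ) + 1) * c)) := by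
    have hcast : ((k - 1 : ℕ) : ℝ) = (k : ℝ) - 1 := by
      rw [Nat.cast_sub (by omega)]; norm_num
    calc ((k : ℝ) * b) ^ 2 = (((k * b : ℕ) : ℝ)) ^ 2 := by push_cast; ring
      _ ≤ ((a * (n * b + (k - 1) * ((k + 1) * c)) : ℕ) : ℝ) := by exact_mod_cast key
      _ = (a : ℝ) * ((n : ℝ) * b + ((k : ℝ) - 1) * (((k : ℝ) + 1) * c)) := by
          push_cast [hcast]; ring
  have haR : (0 : ℝ) < a := by exact_mod_cast h1
  have hbR : (0 : ℝ) < b := by exact_mod_cast h2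
  have hkR : (2 : ℝ) ≤ (k : ℝ) := by exact_mod_cast hk
  have hk2 : (0 : ℝ) < (k : ℝ) ^ 2 - 1 := by nlinarith
  rw [div_le_div_iff₀ hk2 hbR, sub_mul, div_mul_eq_mul_div, sub_le_iff_le_add,
    div_le_iff₀ haR]
  nlinarith [keyR]
end
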